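/- Let μ be a σ-finite measure on ℝ^{d}, p : ℝ^{d} → [0, ∞) measurable, and ρ : ℝ^{d} → (0, ∞) measurable. Let a < b be real numbers and assume ∫ p(x) (ρ(x)^{a} + ρ(x)^{b}) (1 + |log ρ(x)|) μ(dx) < ∞. Then the normalizing function Z(λ) = ∫ p(x) ρ(x)^{λ} μ(dx) is differentiable on the open interval (a, b) with derivative Z′(λ) = ∫ p(x) ρ(x)^{λ} log ρ(x) μ(dx). -/

import Mathlib

open MeasureTheory Real

/-- Differentiability of the normalizing function `Z(λ) = ∫ p ρ^λ dμ` of the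
log-homotopy, with derivative obtained by differentiating under the integral sign. -/
theorem hasDerivAt_homotopy_normalizer
    {d : ℕ} (μ : Measure (Fin d → ℝ)) [SigmaFinite μ]
    (p ρ : (Fin d → ℝ) → ℝ)
    (hpmeas : Measurable p) (hpnn : ∀ x, 0 ≤ p x)
    (hρmeas : Measurable ρ) (hρpos : ∀ x, 0 < ρ x)
    (a b : ℝ) (hab : a < b)
    (hint : Integrable
      (fun x => p x * (ρ x ^ a + ρ x ^ b) * (1 + |Real.log (ρ x)|)) μ) :
    ∀ l ∈ Set.Ioo a b,
      HasDerivAt (fun lam : ℝ => ∫ x, p x * ρ x ^ lam ∂μ)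
        (∫ x, p x * ρ x ^ l * Real.log (ρ x) ∂μ) l := by
  -- key pointwise bound: ρ^λ ≤ ρ^a + ρ^b for λ ∈ [a,b]
  have key : ∀ x, ∀ lam ∈ Set.Icc a b, ρ x ^ lam ≤ ρ x ^ a + ρ x ^ b := by
    intro x lam hlam
    rcases le_or_gt 1 (ρ x) with h1 | h1
    · have : ρ x ^ lam ≤ ρ x ^ b := Real.rpow_le_rpow_of_exponent_le h1 hlam.2
      nlinarith [Real.rpow_pos_of_pos (hρpos x) a]
    · have : ρ x ^ lam ≤ ρ x ^ a :=
        Real.rpow_le_rpow_of_exponent_ge (hρpos x) h1.le hlam.1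
      nlinarith [Real.rpow_pos_of_pos (hρpos x) b]
  intro l hl
  set ε : ℝ := min (l - a) (b - l) with hε
  have hεpos : 0 < ε := lt_min (by linarith [hl.1]) (by linarith [hl.2])
  have hball : ∀ lam ∈ Metric.ball l ε, lam ∈ Set.Icc a b := by
    intro lam hlam
    rw [Metric.mem_ball, Real.dist_eq, abs_lt] at hlam
    constructor
    · have := hlam.1; have : -(min (l - a) (b - l)) < lam - l := this; 
      have h1 : min (l - a) (b - l) ≤ l - a := min_le_left _ _
      linarith
    · have := hlam.2
      have h2 : min (l - a) (b - l) ≤ b - l := min_le_right _ _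
      linarith
  have meas : ∀ lam : ℝ, AEStronglyMeasurable (fun x => p x * ρ x ^ lam) μ :=
    fun lam => (hpmeas.mul (hρmeas.pow_const lam)).aestronglyMeasurable
  have meas' : AEStronglyMeasurable (fun x => p x * ρ x ^ l * Real.log (ρ x)) μ :=
    ((hpmeas.mul (hρmeas.pow_const l)).mul
      (Real.measurable_log.comp hρmeas)).aestronglyMeasurable
  have hbnd : ∀ x, ∀ lam ∈ Metric.ball l ε,
      ‖p x * ρ x ^ lam * Real.log (ρ x)‖ ≤
        p x * (ρ x ^ a + ρ x ^ b) * (1 + |Real.log (ρ x)|) := by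
    intro x lam hlam
    have hrl : 0 < ρ x ^ lam := Real.rpow_pos_of_pos (hρpos x) lam
    have := key x lam (hball lam hlam)
    rw [norm_mul, norm_mul, Real.norm_eq_abs, Real.norm_eq_abs, Real.norm_eq_abs,
      abs_of_nonneg (hpnn x), abs_of_pos hrl]
    have h1 : p x * ρ x ^ lam * |Real.log (ρ x)| ≤
        p x * (ρ x ^ a + ρ x ^ b) * |Real.log (ρ x)| := by
      apply mul_le_mul_of_nonneg_right _ (abs_nonneg _)
      exact mul_le_mul_of_nonneg_left this (hpnn x)
    refine h1.trans ?_
    have hnn : 0 ≤ p x * (ρ x ^ a + ρ x ^ b) :=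
      mul_nonneg (hpnn x) (by
        have := Real.rpow_pos_of_pos (hρpos x) a
        have := Real.rpow_pos_of_pos (hρpos x) b
        linarith)
    nlinarith [abs_nonneg (Real.log (ρ x))]
  have hFint : Integrable (fun x => p x * ρ x ^ l) μ := by
    refine (hint.mono (meas l)) (Filter.Eventually.of_forall fun x => ?_)
    have hrl : 0 < ρ x ^ l := Real.rpow_pos_of_pos (hρpos x) l
    rw [Real.norm_eq_abs, Real.norm_eq_abs, abs_mul, abs_of_nonneg (hpnn x),
      abs_of_pos hrl]
    have h := key x l (hball l (Metric.mem_ball_self hεpos))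
    have hnn : 0 ≤ p x * (ρ x ^ a + ρ x ^ b) :=
      mul_nonneg (hpnn x) (by
        have := Real.rpow_pos_of_pos (hρpos x) a
        have := Real.rpow_pos_of_pos (hρpos x) b
        linarith)
    have h2 : p x * ρ x ^ l ≤ p x * (ρ x ^ a + ρ x ^ b) :=
      mul_le_mul_of_nonneg_left h (hpnn x)
    calc p x * ρ x ^ l ≤ p x * (ρ x ^ a + ρ x ^ b) := h2
      _ ≤ p x * (ρ x ^ a + ρ x ^ b) * (1 + |Real.log (ρ x)|) := by
          nlinarith [abs_nonneg (Real.log (ρ x))]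
      _ ≤ |p x * (ρ x ^ a + ρ x ^ b) * (1 + |Real.log (ρ x)|)| := le_abs_self _
  have h_diff : ∀ x, ∀ lam ∈ Metric.ball l ε,
      HasDerivAt (fun lam : ℝ => p x * ρ x ^ lam)
        (p x * ρ x ^ lam * Real.log (ρ x)) lam := by
    intro x lam _
    have := ((Real.hasStrictDerivAt_const_rpow (hρpos x) lam).hasDerivAt).const_mul (p x)
    simpa [mul_assoc] using this
  exact (hasDerivAt_integral_of_dominated_loc_of_deriv_le (Metric.ball_mem_nhds l hεpos)
    (Filter.Eventually.of_forall meas) hFint meas'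
    (Filter.Eventually.of_forall fun x => hbnd x) hint
    (Filter.Eventually.of_forall fun x => h_diff x)).2
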